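/- arXiv:1908.08864 — 2 statements merged into one kernel-verified Lean document; each statement's English description precedes it below -/
import Mathlib

section
/- Let K be a symmetric positive definite real n×n matrix and σ² > 0, and define Q = K + σ⁻² K·K (i.e., Q = K + Kᵀ(σ² I_n)⁻¹ K). Then Q is invertible and σ⁻² Q⁻¹ K = (K + σ² I_n)⁻¹. In particular, with m = n pseudo-inputs equal to the inputs, the sparse GP posterior predictive mean k_*ᵀ Q⁻¹ K (σ² I_n)⁻¹ y reduces to the full GP posterior predictive mean k_*ᵀ (K + σ² I_n)⁻¹ y for every k_*, y ∈ ℝⁿ. -/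
open Matrix

/-- When the number of pseudo-inputs equals the number of data points (so the
pseudo-inputs are the inputs and the diagonal correction `Λ` vanishes), with
`Q = K + σ⁻² K·K` the matrix `Q` is invertible and `σ⁻² Q⁻¹ K = (K + σ² I_n)⁻¹`; in
particular the sparse GP posterior predictive mean `k_*ᵀ Q⁻¹ K (σ² I_n)⁻¹ y` reduces to
the full GP posterior predictive mean `k_*ᵀ (K + σ² I_n)⁻¹ y`. -/
theorem sgp_reduces_to_gp_mean (n : ℕ)
    (K : Matrix (Fin n) (Fin n) ℝ) (hK : K.PosDef) (σsq : ℝ) (hσ : 0 < σsq) :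
    IsUnit (K + σsq⁻¹ • (K * K)) ∧
    σsq⁻¹ • ((K + σsq⁻¹ • (K * K))⁻¹ * K) =
      (K + σsq • (1 : Matrix (Fin n) (Fin n) ℝ))⁻¹ ∧
    ∀ kstar y : Fin n → ℝ,
      kstar ⬝ᵥ (((K + σsq⁻¹ • (K * K))⁻¹ * K *
          (σsq • (1 : Matrix (Fin n) (Fin n) ℝ))⁻¹) *ᵥ y) =
        kstar ⬝ᵥ ((K + σsq • (1 : Matrix (Fin n) (Fin n) ℝ))⁻¹ *ᵥ y) := by
  set M : Matrix (Fin n) (Fin n) ℝ := K + σsq • (1 : Matrix (Fin n) (Fin n) ℝ) with hM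
  have hσ1 : (σsq • (1 : Matrix (Fin n) (Fin n) ℝ)).PosDef := by
    rw [smul_one_eq_diagonal]
    exact Matrix.PosDef.diagonal (fun _ => hσ)
  have hMpd : M.PosDef := hK.add hσ1
  have hKu : IsUnit K.det := hK.det_pos.ne'.isUnit
  have hMu : IsUnit M.det := hMpd.det_pos.ne'.isUnit
  -- factorization Q = σ⁻² • (K * M)
  have hQ : K + σsq⁻¹ • (K * K) = σsq⁻¹ • (K * M) := by
    rw [hM, mul_add, smul_add, mul_smul_comm, mul_one, smul_smul,
      inv_mul_cancel₀ hσ.ne', one_smul, add_comm]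
  -- candidate inverse
  have hright : (K + σsq⁻¹ • (K * K)) * (σsq • (M⁻¹ * K⁻¹)) = 1 := by
    rw [hQ, smul_mul_assoc, mul_smul_comm, smul_smul, inv_mul_cancel₀ hσ.ne', one_smul,
      mul_assoc, ← mul_assoc M, mul_nonsing_inv _ hMu, one_mul, mul_nonsing_inv _ hKu]
  have hQu : IsUnit (K + σsq⁻¹ • (K * K)) := by
    refine (Matrix.isUnit_iff_isUnit_det _).2 (IsUnit.of_mul_eq_one (σsq • (M⁻¹ * K⁻¹)).det ?_)
    rw [← Matrix.det_mul, hright, Matrix.det_one]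
  have hQinv : (K + σsq⁻¹ • (K * K))⁻¹ = σsq • (M⁻¹ * K⁻¹) :=
    inv_eq_right_inv hright
  have hmain : σsq⁻¹ • ((K + σsq⁻¹ • (K * K))⁻¹ * K) = M⁻¹ := by
    rw [hQinv, smul_mul_assoc, smul_smul, inv_mul_cancel₀ hσ.ne', one_smul,
      mul_assoc, nonsing_inv_mul _ hKu, mul_one]
  refine ⟨hQu, hmain, fun kstar y => ?_⟩
  have hinv1 : (σsq • (1 : Matrix (Fin n) (Fin n) ℝ))⁻¹ = σsq⁻¹ • 1 := by
    apply inv_eq_right_inv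
    rw [smul_mul_assoc, mul_smul_comm, smul_smul, mul_inv_cancel₀ hσ.ne', one_smul, mul_one]
  rw [hinv1, mul_smul_comm, mul_one, hmain]
end

section
/- Let K be a symmetric positive definite real n×n matrix and σ² > 0, and define Q = K + σ⁻² K·K. Then K⁻¹ − Q⁻¹ = (K + σ² I_n)⁻¹. In particular, with m = n pseudo-inputs equal to the inputs, the sparse GP posterior predictive variance σ² + K_{**} − k_*ᵀ K⁻¹ k_* + k_*ᵀ Q⁻¹ k_* reduces to the full GP posterior predictive variance σ² + K_{**} − k_*ᵀ (K + σ² I_n)⁻¹ k_* for every k_* ∈ ℝⁿ and K_{**} ∈ ℝ. -/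
open Matrix

lemma posDef_add_smul_one {n : ℕ} (K : Matrix (Fin n) (Fin n) ℝ) (hK : K.PosDef)
    (σsq : ℝ) (hσ : 0 < σsq) :
    (K + σsq • (1 : Matrix (Fin n) (Fin n) ℝ)).PosDef := by
  rw [posDef_iff_dotProduct_mulVec]
  constructor
  · exact hK.1.add (by simp [Matrix.IsHermitian, Matrix.conjTranspose_smul])
  · intro x hx
    have h1 := hK.dotProduct_mulVec_pos hx
    have h2 : 0 < star x ⬝ᵥ (σsq • (1 : Matrix (Fin n) (Fin n) ℝ)) *ᵥ x := by
      rw [Matrix.smul_mulVec, Matrix.one_mulVec, dotProduct_smul]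
      exact smul_pos hσ (Matrix.dotProduct_star_self_pos_iff.mpr hx)
    calc (0:ℝ) < star x ⬝ᵥ K *ᵥ x + star x ⬝ᵥ (σsq • (1 : Matrix (Fin n) (Fin n) ℝ)) *ᵥ x :=
          add_pos h1 h2
      _ = star x ⬝ᵥ (K + σsq • (1 : Matrix (Fin n) (Fin n) ℝ)) *ᵥ x := by
          rw [Matrix.add_mulVec, dotProduct_add]

/-- When the number of pseudo-inputs equals the number of data points, with
`Q = K + σ⁻² K·K` one has `K⁻¹ − Q⁻¹ = (K + σ² I_n)⁻¹`; in particular the sparse GP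
posterior predictive variance `σ² + K_{**} − k_*ᵀ K⁻¹ k_* + k_*ᵀ Q⁻¹ k_*` reduces to the
full GP posterior predictive variance `σ² + K_{**} − k_*ᵀ (K + σ² I_n)⁻¹ k_*`. -/
theorem sgp_reduces_to_gp_variance (n : ℕ)
    (K : Matrix (Fin n) (Fin n) ℝ) (hK : K.PosDef) (σsq : ℝ) (hσ : 0 < σsq) :
    K⁻¹ - (K + σsq⁻¹ • (K * K))⁻¹ =
      (K + σsq • (1 : Matrix (Fin n) (Fin n) ℝ))⁻¹ ∧
    ∀ (kstar : Fin n → ℝ) (Kss : ℝ),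
      σsq + Kss - kstar ⬝ᵥ (K⁻¹ *ᵥ kstar) +
          kstar ⬝ᵥ ((K + σsq⁻¹ • (K * K))⁻¹ *ᵥ kstar) =
        σsq + Kss -
          kstar ⬝ᵥ ((K + σsq • (1 : Matrix (Fin n) (Fin n) ℝ))⁻¹ *ᵥ kstar) := by
  set A := K + σsq • (1 : Matrix (Fin n) (Fin n) ℝ) with hA
  have hApd : A.PosDef := posDef_add_smul_one K hK σsq hσ
  have hKu : IsUnit K.det := hK.isUnit.map (Matrix.detMonoidHom)
  have hAu : IsUnit A.det := hApd.isUnit.map (Matrix.detMonoidHom)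
  have hQ : K + σsq⁻¹ • (K * K) = σsq⁻¹ • (K * A) := by
    rw [hA, Matrix.mul_add, smul_add, Matrix.mul_smul, Matrix.mul_one, smul_smul,
      inv_mul_cancel₀ hσ.ne', one_smul, add_comm]
  have hQinv : (K + σsq⁻¹ • (K * K))⁻¹ = σsq • (A⁻¹ * K⁻¹) := by
    haveI : Invertible σsq⁻¹ := invertibleOfNonzero (inv_ne_zero hσ.ne')
    have hdet : IsUnit (K * A).det := by rw [Matrix.det_mul]; exact hKu.mul hAu
    rw [hQ]
    rw [Matrix.inv_smul (A := K * A) σsq⁻¹ hdet]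
    rw [invOf_eq_inv, inv_inv, Matrix.mul_inv_rev]
  have hmain : K⁻¹ - (K + σsq⁻¹ • (K * K))⁻¹ = A⁻¹ := by
    rw [hQinv]
    have : K⁻¹ - σsq • (A⁻¹ * K⁻¹) = (1 - σsq • A⁻¹) * K⁻¹ := by
      rw [Matrix.sub_mul, Matrix.one_mul, Matrix.smul_mul]
    rw [this]
    have h1 : (1 : Matrix (Fin n) (Fin n) ℝ) - σsq • A⁻¹ = A⁻¹ * K := by
      have : A⁻¹ * K = A⁻¹ * (A - σsq • 1) := by
        rw [hA, add_sub_cancel_right]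
      rw [this, Matrix.mul_sub, Matrix.nonsing_inv_mul _ hAu, Matrix.mul_smul,
        Matrix.mul_one]
    rw [h1, Matrix.mul_assoc, Matrix.mul_nonsing_inv _ hKu, Matrix.mul_one]
  refine ⟨hmain, fun kstar Kss => ?_⟩
  have := congrArg (fun M => kstar ⬝ᵥ M *ᵥ kstar) hmain
  simp only [Matrix.sub_mulVec, dotProduct_sub] at this
  linarith
end
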